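/- Let G be a finite simple (C4,C6,P6)-free graph containing an induced copy of F2 with vertices labelled v1,...,v5,t,x,y (so C = v1v2v3v4v5 is the underlying induced 5-cycle, x ∈ S(4,5), y ∈ S(2,3) and t ∈ S(5,1,2) with respect to C). Then, with respect to C: S(1) = S(3) = S(4) = ∅, so that S_1 = S(2) ∪ S(5); at least one of S(2) and S(5) is empty; and S(3,4) = S(1,2) = S(5,1) = ∅, so that S_2 = S(2,3) ∪ S(4,5). -/

import Mathlib

open SimpleGraph

/-- `G` contains no induced subgraph isomorphic to `H` (`H`-freeness, via graph embeddings). -/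
def Free {V W : Type*} (G : SimpleGraph V) (H : SimpleGraph W) : Prop :=
  IsEmpty (H ↪g G)

/-- `v 1, v 2, v 3, v 4, v 0` are the vertices `v₁,…,v₅` of an induced 5-cycle of `G`
(in cyclic order, indices taken modulo 5, with `v 0` playing the role of `v₅`). -/
def IsInducedC5 {V : Type*} (G : SimpleGraph V) (v : ZMod 5 → V) : Prop :=
  Function.Injective v ∧ ∀ i j, G.Adj (v i) (v j) ↔ (j = i + 1 ∨ i = j + 1)

/-- `S(X)`: the vertices outside the cycle whose neighbourhood on the cycle is exactly
`{v i : i ∈ X}`. -/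
def cycS {V : Type*} (G : SimpleGraph V) (v : ZMod 5 → V) (X : Set (ZMod 5)) : Set V :=
  {u | (∀ i, u ≠ v i) ∧ ∀ i, (G.Adj u (v i) ↔ i ∈ X)}

/-- `S_j`: the vertices outside the cycle with exactly `j` neighbours on the cycle. -/
def cycSdeg {V : Type*} (G : SimpleGraph V) (v : ZMod 5 → V) (j : ℕ) : Set V :=
  {u | (∀ i, u ≠ v i) ∧ {i : ZMod 5 | G.Adj u (v i)}.ncard = j}

/-- `A` is complete to `B`: every vertex of `A` is adjacent to every vertex of `B`. -/
def CompleteTo {V : Type*} (G : SimpleGraph V) (A B : Set V) : Prop :=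
  ∀ a ∈ A, ∀ b ∈ B, G.Adj a b

/-- `A` is anti-complete to `B`: there are no edges between `A` and `B`. -/
def AntiCompleteTo {V : Type*} (G : SimpleGraph V) (A B : Set V) : Prop :=
  ∀ a ∈ A, ∀ b ∈ B, ¬ G.Adj a b

/-- `K` is a clique cutset of `G`: a clique whose removal increases the number of
connected components. -/
def IsCliqueCutset {V : Type*} (G : SimpleGraph V) (K : Set V) : Prop :=
  G.IsClique K ∧
    Nat.card G.ConnectedComponent < Nat.card (G.induce Kᶜ).ConnectedComponent

/-- An atom is a graph with no clique cutset. -/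
def IsGraphAtom {V : Type*} (G : SimpleGraph V) : Prop :=
  ∀ K : Set V, ¬ IsCliqueCutset G K

/-- A strong atom: an atom with no universal vertex and no pair of (true) twins. -/
def IsStrongAtom {V : Type*} (G : SimpleGraph V) : Prop :=
  IsGraphAtom G ∧ (∀ u : V, ¬ ∀ w, w ≠ u → G.Adj u w) ∧
    ∀ u w : V, G.Adj u w → ¬ ∀ z, z ≠ u → z ≠ w → (G.Adj z u ↔ G.Adj z w)

/-- The graph `F₁` of the paper: vertices `0,…,4` are `v₁,…,v₅` (a 5-cycle), `5 = x`,
`6 = y`, `7 = z`; edges: the 5-cycle, `yv₂, yv₃, zv₄, zv₅, xv₃, xv₄, xy, xz`. -/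
def F1 : SimpleGraph (Fin 8) :=
  SimpleGraph.fromRel (fun a b => (a, b) ∈
    [((0 : Fin 8), (1 : Fin 8)), (1, 2), (2, 3), (3, 4), (4, 0),
     (6, 1), (6, 2), (7, 3), (7, 4), (5, 2), (5, 3), (5, 6), (5, 7)])

/-- The graph `F₂` of the paper: vertices `0,…,4` are `v₁,…,v₅` (a 5-cycle), `5 = t`,
`6 = x`, `7 = y`; edges: the 5-cycle, `yv₂, yv₃, xv₄, xv₅, tv₅, tv₁, tv₂, tx, ty`. -/
def F2 : SimpleGraph (Fin 8) :=
  SimpleGraph.fromRel (fun a b => (a, b) ∈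
    [((0 : Fin 8), (1 : Fin 8)), (1, 2), (2, 3), (3, 4), (4, 0),
     (7, 1), (7, 2), (6, 3), (6, 4), (5, 4), (5, 0), (5, 1), (5, 6), (5, 7)])

instance : DecidableRel F2.Adj := fun a b =>
  decidable_of_iff _ (SimpleGraph.fromRel_adj _ a b).symm

/-- The underlying 5-cycle `v₁,…,v₅` (as a map `ZMod 5 → V`, with `v 0 = v₅`) of an
(induced) copy of `F₁` or `F₂` given by a vertex map `f : Fin 8 → V`. -/
def underlyingC5 {V : Type*} (f : Fin 8 → V) : ZMod 5 → V :=
  fun i => f ⟨(i - 1).val, by have := ZMod.val_lt (i - 1); omega⟩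


section Helpers
variable {V : Type*} (G : SimpleGraph V)

lemma no_C4 (h : _root_.Free G (cycleGraph 4)) {a b c d : V}
    (hac : a ≠ c) (hbd : b ≠ d)
    (pab : G.Adj a b) (pbc : G.Adj b c) (pcd : G.Adj c d) (pad : G.Adj a d)
    (nac : ¬G.Adj a c) (nbd : ¬G.Adj b d) : False := by
  have pba := pab.symm; have pcb := pbc.symm; have pdc := pcd.symm; have pda := pad.symm
  have nca : ¬G.Adj c a := fun h' => nac h'.symm
  have ndb : ¬G.Adj d b := fun h' => nbd h'.symm
  have hab := pab.ne; have hbc := pbc.ne; have hcd := pcd.ne; have had := pad.ne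
  have inj : Function.Injective ![a,b,c,d] := by
    intro i j hij
    fin_cases i <;> fin_cases j <;>
      first
        | rfl
        | (exfalso; revert hij;
           simp only [Matrix.cons_val_zero, Matrix.cons_val_one, Matrix.head_cons,
             Matrix.cons_val_two, Matrix.tail_cons, Matrix.cons_val_three, Fin.isValue]
           intro hij
           first | exact (by assumption : _ ≠ _) hij | exact (by assumption : _ ≠ _) hij.symm)
  exact h.elim ⟨⟨![a,b,c,d], inj⟩, by
    intro i j
    fin_cases i <;> fin_cases j <;>
      simp only [Matrix.cons_val_zero, Matrix.cons_val_one, Matrix.head_cons,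
        Matrix.cons_val_two, Matrix.tail_cons, Matrix.cons_val_three, Fin.isValue] <;>
      first
        | exact iff_of_false (G.irrefl) (by decide)
        | exact iff_of_true (by assumption) (by decide)
        | exact iff_of_false (by assumption) (by decide)⟩

lemma no_C6 (h : _root_.Free G (cycleGraph 6)) {a b c d e f : V}
    (pab : G.Adj a b) (pbc : G.Adj b c) (pcd : G.Adj c d) (pde : G.Adj d e)
    (pef : G.Adj e f) (paf : G.Adj a f)
    (nac : ¬G.Adj a c) (nad : ¬G.Adj a d) (nae : ¬G.Adj a e)
    (nbd : ¬G.Adj b d) (nbe : ¬G.Adj b e) (nbf : ¬G.Adj b f)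
    (nce : ¬G.Adj c e) (ncf : ¬G.Adj c f) (ndf : ¬G.Adj d f) : False := by
  have pba := pab.symm; have pcb := pbc.symm; have pdc := pcd.symm
  have ped := pde.symm; have pfe := pef.symm; have pfa := paf.symm
  have nca : ¬G.Adj c a := fun h' => nac h'.symm
  have nda : ¬G.Adj d a := fun h' => nad h'.symm
  have nea : ¬G.Adj e a := fun h' => nae h'.symm
  have ndb : ¬G.Adj d b := fun h' => nbd h'.symm
  have neb : ¬G.Adj e b := fun h' => nbe h'.symm
  have nfb : ¬G.Adj f b := fun h' => nbf h'.symm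
  have nec : ¬G.Adj e c := fun h' => nce h'.symm
  have nfc : ¬G.Adj f c := fun h' => ncf h'.symm
  have nfd : ¬G.Adj f d := fun h' => ndf h'.symm
  have hac : a ≠ c := fun h' => ncf (by rw [← h']; exact paf)
  have had : a ≠ d := fun h' => nbd (by rw [← h']; exact pab.symm)
  have hae : a ≠ e := fun h' => nbe (by rw [← h']; exact pab.symm)
  have hbd : b ≠ d := fun h' => nad (by rw [← h']; exact pab)
  have hbe : b ≠ e := fun h' => nae (by rw [← h']; exact pab)
  have hbf : b ≠ f := fun h' => ncf (by rw [← h']; exact pbc.symm)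
  have hce : c ≠ e := fun h' => nbe (by rw [← h']; exact pbc)
  have hcf : c ≠ f := fun h' => ndf (by rw [← h']; exact pcd.symm)
  have hdf : d ≠ f := fun h' => ncf (by rw [← h']; exact pcd)
  have hab := pab.ne; have hbc := pbc.ne; have hcd := pcd.ne
  have hde := pde.ne; have hef := pef.ne; have haf := paf.ne
  have inj : Function.Injective ![a,b,c,d,e,f] := by
    intro i j hij
    fin_cases i <;> fin_cases j <;>
      first
        | rfl
        | (exfalso; revert hij;
           simp only [Matrix.cons_val_zero, Matrix.cons_val_one, Matrix.head_cons,
             Matrix.cons_val_two, Matrix.tail_cons, Matrix.cons_val_three,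
             Matrix.cons_val_four, Fin.isValue]
           intro hij
           first | exact (by assumption : _ ≠ _) hij | exact (by assumption : _ ≠ _) hij.symm)
  exact h.elim ⟨⟨![a,b,c,d,e,f], inj⟩, by
    intro i j
    fin_cases i <;> fin_cases j <;>
      simp only [Matrix.cons_val_zero, Matrix.cons_val_one, Matrix.head_cons,
        Matrix.cons_val_two, Matrix.tail_cons, Matrix.cons_val_three,
        Matrix.cons_val_four, Fin.isValue] <;>
      first
        | exact iff_of_false (G.irrefl) (by decide)
        | exact iff_of_true (by assumption) (by decide)
        | exact iff_of_false (by assumption) (by decide)⟩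

lemma no_P6 (h : _root_.Free G (pathGraph 6)) {a b c d e f : V}
    (pab : G.Adj a b) (pbc : G.Adj b c) (pcd : G.Adj c d) (pde : G.Adj d e) (pef : G.Adj e f)
    (nac : ¬G.Adj a c) (nad : ¬G.Adj a d) (nae : ¬G.Adj a e) (naf : ¬G.Adj a f)
    (nbd : ¬G.Adj b d) (nbe : ¬G.Adj b e) (nbf : ¬G.Adj b f)
    (nce : ¬G.Adj c e) (ncf : ¬G.Adj c f) (ndf : ¬G.Adj d f) : False := by
  have pba := pab.symm; have pcb := pbc.symm; have pdc := pcd.symm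
  have ped := pde.symm; have pfe := pef.symm
  have nca : ¬G.Adj c a := fun h' => nac h'.symm
  have nda : ¬G.Adj d a := fun h' => nad h'.symm
  have nea : ¬G.Adj e a := fun h' => nae h'.symm
  have nfa : ¬G.Adj f a := fun h' => naf h'.symm
  have ndb : ¬G.Adj d b := fun h' => nbd h'.symm
  have neb : ¬G.Adj e b := fun h' => nbe h'.symm
  have nfb : ¬G.Adj f b := fun h' => nbf h'.symm
  have nec : ¬G.Adj e c := fun h' => nce h'.symm
  have nfc : ¬G.Adj f c := fun h' => ncf h'.symm
  have nfd : ¬G.Adj f d := fun h' => ndf h'.symm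
  have hac : a ≠ c := fun h' => nad (by rw [h']; exact pcd)
  have had : a ≠ d := fun h' => nbd (by rw [h'] at pab; exact pab.symm)
  have hae : a ≠ e := fun h' => nbe (by rw [h'] at pab; exact pab.symm)
  have haf : a ≠ f := fun h' => nbf (by rw [h'] at pab; exact pab.symm)
  have hbd : b ≠ d := fun h' => nad (by rw [← h']; exact pab)
  have hbe : b ≠ e := fun h' => nae (by rw [← h']; exact pab)
  have hbf : b ≠ f := fun h' => naf (by rw [← h']; exact pab)
  have hce : c ≠ e := fun h' => nbe (by rw [← h']; exact pbc)
  have hcf : c ≠ f := fun h' => nbf (by rw [← h']; exact pbc)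
  have hdf : d ≠ f := fun h' => ncf (by rw [← h']; exact pcd)
  have hab := pab.ne; have hbc := pbc.ne; have hcd := pcd.ne
  have hde := pde.ne; have hef := pef.ne
  have inj : Function.Injective ![a,b,c,d,e,f] := by
    intro i j hij
    fin_cases i <;> fin_cases j <;>
      first
        | rfl
        | (exfalso; revert hij;
           simp only [Matrix.cons_val_zero, Matrix.cons_val_one, Matrix.head_cons,
             Matrix.cons_val_two, Matrix.tail_cons, Matrix.cons_val_three,
             Matrix.cons_val_four, Fin.isValue]
           intro hij
           first | exact (by assumption : _ ≠ _) hij | exact (by assumption : _ ≠ _) hij.symm)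
  exact h.elim ⟨⟨![a,b,c,d,e,f], inj⟩, by
    intro i j
    fin_cases i <;> fin_cases j <;>
      simp only [Matrix.cons_val_zero, Matrix.cons_val_one, Matrix.head_cons,
        Matrix.cons_val_two, Matrix.tail_cons, Matrix.cons_val_three,
        Matrix.cons_val_four, Fin.isValue] <;>
      first
        | exact iff_of_false (G.irrefl) (by rw [pathGraph_adj]; decide)
        | exact iff_of_true (by assumption) (by rw [pathGraph_adj]; decide)
        | exact iff_of_false (by assumption) (by rw [pathGraph_adj]; decide)⟩

end Helpers

lemma aux {V : Type*} (G : SimpleGraph V)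
    (hC4 : _root_.Free G (cycleGraph 4)) (hC6 : _root_.Free G (cycleGraph 6))
    (hP6 : _root_.Free G (pathGraph 6))
    (v : ZMod 5 → V) (t x y : V)
    (hv : IsInducedC5 G v)
    (ht : t ∈ cycS G v {0, 1, 2}) (hx : x ∈ cycS G v {4, 0}) (hy : y ∈ cycS G v {2, 3})
    (ptx : G.Adj t x) (pty : G.Adj t y) (nxy : ¬G.Adj x y) (nexy : x ≠ y) :
    (cycS G v {1} = ∅ ∧ cycS G v {3} = ∅ ∧ cycS G v {4} = ∅) ∧
    cycSdeg G v 1 = cycS G v {2} ∪ cycS G v {5} ∧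
    (cycS G v {2} = ∅ ∨ cycS G v {5} = ∅) ∧
    (cycS G v {3, 4} = ∅ ∧ cycS G v {1, 2} = ∅ ∧ cycS G v {5, 1} = ∅) ∧
    cycSdeg G v 2 = cycS G v {2, 3} ∪ cycS G v {4, 5} := by
  obtain ⟨hvinj, hvA⟩ := hv
  obtain ⟨htv, htA⟩ := ht
  obtain ⟨hxv, hxA⟩ := hx
  obtain ⟨hyv, hyA⟩ := hy
  have p01 : G.Adj (v 0) (v 1) := (hvA 0 1).mpr (by decide)
  have p10 : G.Adj (v 1) (v 0) := (hvA 1 0).mpr (by decide)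
  have p12 : G.Adj (v 1) (v 2) := (hvA 1 2).mpr (by decide)
  have p21 : G.Adj (v 2) (v 1) := (hvA 2 1).mpr (by decide)
  have p23 : G.Adj (v 2) (v 3) := (hvA 2 3).mpr (by decide)
  have p32 : G.Adj (v 3) (v 2) := (hvA 3 2).mpr (by decide)
  have p34 : G.Adj (v 3) (v 4) := (hvA 3 4).mpr (by decide)
  have p43 : G.Adj (v 4) (v 3) := (hvA 4 3).mpr (by decide)
  have p40 : G.Adj (v 4) (v 0) := (hvA 4 0).mpr (by decide)
  have p04 : G.Adj (v 0) (v 4) := (hvA 0 4).mpr (by decide)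
  have n02 : ¬G.Adj (v 0) (v 2) := fun h' => by have h2 := (hvA 0 2).mp h'; revert h2; decide
  have n20 : ¬G.Adj (v 2) (v 0) := fun h' => by have h2 := (hvA 2 0).mp h'; revert h2; decide
  have n13 : ¬G.Adj (v 1) (v 3) := fun h' => by have h2 := (hvA 1 3).mp h'; revert h2; decide
  have n31 : ¬G.Adj (v 3) (v 1) := fun h' => by have h2 := (hvA 3 1).mp h'; revert h2; decide
  have n24 : ¬G.Adj (v 2) (v 4) := fun h' => by have h2 := (hvA 2 4).mp h'; revert h2; decide
  have n42 : ¬G.Adj (v 4) (v 2) := fun h' => by have h2 := (hvA 4 2).mp h'; revert h2; decide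
  have n30 : ¬G.Adj (v 3) (v 0) := fun h' => by have h2 := (hvA 3 0).mp h'; revert h2; decide
  have n03 : ¬G.Adj (v 0) (v 3) := fun h' => by have h2 := (hvA 0 3).mp h'; revert h2; decide
  have n41 : ¬G.Adj (v 4) (v 1) := fun h' => by have h2 := (hvA 4 1).mp h'; revert h2; decide
  have n14 : ¬G.Adj (v 1) (v 4) := fun h' => by have h2 := (hvA 1 4).mp h'; revert h2; decide
  have pt0 : G.Adj t (v 0) := (htA 0).mpr (by simp only [Set.mem_insert_iff, Set.mem_singleton_iff] <;> decide)
  have p0t := pt0.symm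
  have pt1 : G.Adj t (v 1) := (htA 1).mpr (by simp only [Set.mem_insert_iff, Set.mem_singleton_iff] <;> decide)
  have p1t := pt1.symm
  have pt2 : G.Adj t (v 2) := (htA 2).mpr (by simp only [Set.mem_insert_iff, Set.mem_singleton_iff] <;> decide)
  have p2t := pt2.symm
  have nt3 : ¬G.Adj t (v 3) := fun h' => by have h2 := (htA 3).mp h'; simp only [Set.mem_insert_iff, Set.mem_singleton_iff] at h2; revert h2; decide
  have n3t : ¬G.Adj (v 3) t := fun h' => nt3 h'.symm
  have nt4 : ¬G.Adj t (v 4) := fun h' => by have h2 := (htA 4).mp h'; simp only [Set.mem_insert_iff, Set.mem_singleton_iff] at h2; revert h2; decide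
  have n4t : ¬G.Adj (v 4) t := fun h' => nt4 h'.symm
  have px4 : G.Adj x (v 4) := (hxA 4).mpr (by simp only [Set.mem_insert_iff, Set.mem_singleton_iff] <;> decide)
  have p4x := px4.symm
  have px0 : G.Adj x (v 0) := (hxA 0).mpr (by simp only [Set.mem_insert_iff, Set.mem_singleton_iff] <;> decide)
  have p0x := px0.symm
  have nx1 : ¬G.Adj x (v 1) := fun h' => by have h2 := (hxA 1).mp h'; simp only [Set.mem_insert_iff, Set.mem_singleton_iff] at h2; revert h2; decide
  have n1x : ¬G.Adj (v 1) x := fun h' => nx1 h'.symm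
  have nx2 : ¬G.Adj x (v 2) := fun h' => by have h2 := (hxA 2).mp h'; simp only [Set.mem_insert_iff, Set.mem_singleton_iff] at h2; revert h2; decide
  have n2x : ¬G.Adj (v 2) x := fun h' => nx2 h'.symm
  have nx3 : ¬G.Adj x (v 3) := fun h' => by have h2 := (hxA 3).mp h'; simp only [Set.mem_insert_iff, Set.mem_singleton_iff] at h2; revert h2; decide
  have n3x : ¬G.Adj (v 3) x := fun h' => nx3 h'.symm
  have py2 : G.Adj y (v 2) := (hyA 2).mpr (by simp only [Set.mem_insert_iff, Set.mem_singleton_iff] <;> decide)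
  have p2y := py2.symm
  have py3 : G.Adj y (v 3) := (hyA 3).mpr (by simp only [Set.mem_insert_iff, Set.mem_singleton_iff] <;> decide)
  have p3y := py3.symm
  have ny0 : ¬G.Adj y (v 0) := fun h' => by have h2 := (hyA 0).mp h'; simp only [Set.mem_insert_iff, Set.mem_singleton_iff] at h2; revert h2; decide
  have n0y : ¬G.Adj (v 0) y := fun h' => ny0 h'.symm
  have ny1 : ¬G.Adj y (v 1) := fun h' => by have h2 := (hyA 1).mp h'; simp only [Set.mem_insert_iff, Set.mem_singleton_iff] at h2; revert h2; decide
  have n1y : ¬G.Adj (v 1) y := fun h' => ny1 h'.symm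
  have ny4 : ¬G.Adj y (v 4) := fun h' => by have h2 := (hyA 4).mp h'; simp only [Set.mem_insert_iff, Set.mem_singleton_iff] at h2; revert h2; decide
  have n4y : ¬G.Adj (v 4) y := fun h' => ny4 h'.symm
  have pxt := ptx.symm; have pyt := pty.symm

  have empty1 : cycS G v {1} = ∅ := by
    rw [Set.eq_empty_iff_forall_notMem]
    rintro u ⟨hu1, huA⟩
    have pu1 : G.Adj u (v 1) := (huA 1).mpr (by simp only [Set.mem_insert_iff, Set.mem_singleton_iff] <;> decide)
    have nu0 : ¬G.Adj u (v 0) := fun h' => by have h2 := (huA 0).mp h'; simp only [Set.mem_insert_iff, Set.mem_singleton_iff] at h2; revert h2; decide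
    have nu2 : ¬G.Adj u (v 2) := fun h' => by have h2 := (huA 2).mp h'; simp only [Set.mem_insert_iff, Set.mem_singleton_iff] at h2; revert h2; decide
    have nu3 : ¬G.Adj u (v 3) := fun h' => by have h2 := (huA 3).mp h'; simp only [Set.mem_insert_iff, Set.mem_singleton_iff] at h2; revert h2; decide
    have nu4 : ¬G.Adj u (v 4) := fun h' => by have h2 := (huA 4).mp h'; simp only [Set.mem_insert_iff, Set.mem_singleton_iff] at h2; revert h2; decide
    by_cases hux : G.Adj u x
    · exact no_C4 G hC4 (hu1 0) (hxv 1) hux px0 p01 pu1 nu0 nx1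
    · exact no_P6 G hP6 pu1 p12 p23 p34 p4x nu2 nu3 nu4 hux n13 n14 n1x n24 n2x n3x
  have empty3 : cycS G v {3} = ∅ := by
    rw [Set.eq_empty_iff_forall_notMem]
    rintro u ⟨hu1, huA⟩
    have pu3 : G.Adj u (v 3) := (huA 3).mpr (by simp only [Set.mem_insert_iff, Set.mem_singleton_iff] <;> decide)
    have nu0 : ¬G.Adj u (v 0) := fun h' => by have h2 := (huA 0).mp h'; simp only [Set.mem_insert_iff, Set.mem_singleton_iff] at h2; revert h2; decide
    have nu1 : ¬G.Adj u (v 1) := fun h' => by have h2 := (huA 1).mp h'; simp only [Set.mem_insert_iff, Set.mem_singleton_iff] at h2; revert h2; decide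
    have nu2 : ¬G.Adj u (v 2) := fun h' => by have h2 := (huA 2).mp h'; simp only [Set.mem_insert_iff, Set.mem_singleton_iff] at h2; revert h2; decide
    have nu4 : ¬G.Adj u (v 4) := fun h' => by have h2 := (huA 4).mp h'; simp only [Set.mem_insert_iff, Set.mem_singleton_iff] at h2; revert h2; decide
    by_cases hux : G.Adj u x
    · exact no_C4 G hC4 (hu1 4) (Ne.symm (hxv 3)) pu3 p34 p4x hux nu4 n3x
    · by_cases hut : G.Adj u t
      · exact no_C4 G hC4 (hu1 2) (htv 3) hut pt2 p23 pu3 nu2 nt3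
      · exact no_P6 G hP6 pu3 p34 p4x pxt pt1 nu4 hux hut nu1 n3x n3t n31 n4t n41 nx1
  have empty4 : cycS G v {4} = ∅ := by
    rw [Set.eq_empty_iff_forall_notMem]
    rintro u ⟨hu1, huA⟩
    have pu4 : G.Adj u (v 4) := (huA 4).mpr (by simp only [Set.mem_insert_iff, Set.mem_singleton_iff] <;> decide)
    have nu0 : ¬G.Adj u (v 0) := fun h' => by have h2 := (huA 0).mp h'; simp only [Set.mem_insert_iff, Set.mem_singleton_iff] at h2; revert h2; decide
    have nu1 : ¬G.Adj u (v 1) := fun h' => by have h2 := (huA 1).mp h'; simp only [Set.mem_insert_iff, Set.mem_singleton_iff] at h2; revert h2; decide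
    have nu2 : ¬G.Adj u (v 2) := fun h' => by have h2 := (huA 2).mp h'; simp only [Set.mem_insert_iff, Set.mem_singleton_iff] at h2; revert h2; decide
    have nu3 : ¬G.Adj u (v 3) := fun h' => by have h2 := (huA 3).mp h'; simp only [Set.mem_insert_iff, Set.mem_singleton_iff] at h2; revert h2; decide
    by_cases huy : G.Adj u y
    · exact no_C4 G hC4 (hu1 3) (Ne.symm (hyv 4)) pu4 p43 p3y huy nu3 n4y
    · by_cases hut : G.Adj u t
      · exact no_C4 G hC4 (hu1 0) (htv 4) hut pt0 p04 pu4 nu0 nt4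
      · exact no_P6 G hP6 pu4 p43 p3y pyt pt1 nu3 huy hut nu1 n4y n4t n41 n3t n31 ny1
  have empty34 : cycS G v {3, 4} = ∅ := by
    rw [Set.eq_empty_iff_forall_notMem]
    rintro u ⟨hu1, huA⟩
    have pu3 : G.Adj u (v 3) := (huA 3).mpr (by simp only [Set.mem_insert_iff, Set.mem_singleton_iff] <;> decide)
    have pu4 : G.Adj u (v 4) := (huA 4).mpr (by simp only [Set.mem_insert_iff, Set.mem_singleton_iff] <;> decide)
    have nu0 : ¬G.Adj u (v 0) := fun h' => by have h2 := (huA 0).mp h'; simp only [Set.mem_insert_iff, Set.mem_singleton_iff] at h2; revert h2; decide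
    have nu1 : ¬G.Adj u (v 1) := fun h' => by have h2 := (huA 1).mp h'; simp only [Set.mem_insert_iff, Set.mem_singleton_iff] at h2; revert h2; decide
    have nu2 : ¬G.Adj u (v 2) := fun h' => by have h2 := (huA 2).mp h'; simp only [Set.mem_insert_iff, Set.mem_singleton_iff] at h2; revert h2; decide
    have hut0 : ¬G.Adj u t := fun hut =>
      no_C4 G hC4 (hu1 2) (htv 3) hut pt2 p23 pu3 nu2 nt3
    by_cases hux : G.Adj u x
    · by_cases huy : G.Adj u y
      · exact no_C4 G hC4 (fun h' => nt3 (by rw [← h']; exact pu3)) nexy hux pxt pty huy hut0 nxy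
      · exact no_P6 G hP6 py2 p21 p10 p04 pu4.symm ny1 ny0 ny4 (fun h' => huy h'.symm)
          n20 n24 (fun h' => nu2 h'.symm) n14 (fun h' => nu1 h'.symm) (fun h' => nu0 h'.symm)
    · exact no_P6 G hP6 px0 p01 p12 p23 pu3.symm nx1 nx2 nx3 (fun h' => hux h'.symm)
        n02 n03 (fun h' => nu0 h'.symm) n13 (fun h' => nu1 h'.symm) (fun h' => nu2 h'.symm)
  have empty12 : cycS G v {1, 2} = ∅ := by
    rw [Set.eq_empty_iff_forall_notMem]
    rintro u ⟨hu1, huA⟩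
    have pu1 : G.Adj u (v 1) := (huA 1).mpr (by simp only [Set.mem_insert_iff, Set.mem_singleton_iff] <;> decide)
    have pu2 : G.Adj u (v 2) := (huA 2).mpr (by simp only [Set.mem_insert_iff, Set.mem_singleton_iff] <;> decide)
    have nu0 : ¬G.Adj u (v 0) := fun h' => by have h2 := (huA 0).mp h'; simp only [Set.mem_insert_iff, Set.mem_singleton_iff] at h2; revert h2; decide
    have nu3 : ¬G.Adj u (v 3) := fun h' => by have h2 := (huA 3).mp h'; simp only [Set.mem_insert_iff, Set.mem_singleton_iff] at h2; revert h2; decide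
    have nu4 : ¬G.Adj u (v 4) := fun h' => by have h2 := (huA 4).mp h'; simp only [Set.mem_insert_iff, Set.mem_singleton_iff] at h2; revert h2; decide
    by_cases huy : G.Adj u y
    · exact no_C6 G hC6 huy py3 p34 p40 p01 pu1 nu3 nu4 nu0 ny4 ny0 ny1 n30 n31 n41
    · exact no_P6 G hP6 pu1 p10 p04 p43 p3y nu0 nu4 nu3 huy n14 n13 n1y n03 n0y n4y
  have empty01 : cycS G v {5, 1} = ∅ := by
    rw [Set.eq_empty_iff_forall_notMem]
    rintro u ⟨hu1, huA⟩
    have pu0 : G.Adj u (v 0) := (huA 0).mpr (by simp only [Set.mem_insert_iff, Set.mem_singleton_iff] <;> decide)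
    have pu1 : G.Adj u (v 1) := (huA 1).mpr (by simp only [Set.mem_insert_iff, Set.mem_singleton_iff] <;> decide)
    have nu2 : ¬G.Adj u (v 2) := fun h' => by have h2 := (huA 2).mp h'; simp only [Set.mem_insert_iff, Set.mem_singleton_iff] at h2; revert h2; decide
    have nu3 : ¬G.Adj u (v 3) := fun h' => by have h2 := (huA 3).mp h'; simp only [Set.mem_insert_iff, Set.mem_singleton_iff] at h2; revert h2; decide
    have nu4 : ¬G.Adj u (v 4) := fun h' => by have h2 := (huA 4).mp h'; simp only [Set.mem_insert_iff, Set.mem_singleton_iff] at h2; revert h2; decide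
    by_cases hux : G.Adj u x
    · exact no_C6 G hC6 hux px4 p43 p32 p21 pu1 nu4 nu3 nu2 nx3 nx2 nx1 n42 n41 n31
    · exact no_P6 G hP6 pu1 p12 p23 p34 p4x nu2 nu3 nu4 hux n13 n14 n1x n24 n2x n3x
  have claim25 : ∀ a b : V, a ∈ cycS G v {2} → b ∈ cycS G v {5} → False := by
    rintro a b ⟨ha1, haA⟩ ⟨hb1, hbA⟩
    have pa2 : G.Adj a (v 2) := (haA 2).mpr (by simp only [Set.mem_singleton_iff] <;> decide)
    have na0 : ¬G.Adj a (v 0) := fun h' => by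
      have h2 := (haA 0).mp h'; simp only [Set.mem_singleton_iff] at h2; revert h2; decide
    have na3 : ¬G.Adj a (v 3) := fun h' => by
      have h2 := (haA 3).mp h'; simp only [Set.mem_singleton_iff] at h2; revert h2; decide
    have na4 : ¬G.Adj a (v 4) := fun h' => by
      have h2 := (haA 4).mp h'; simp only [Set.mem_singleton_iff] at h2; revert h2; decide
    have pb0 : G.Adj b (v 0) := (hbA 0).mpr (by simp only [Set.mem_singleton_iff] <;> decide)
    have nb2 : ¬G.Adj b (v 2) := fun h' => by
      have h2 := (hbA 2).mp h'; simp only [Set.mem_singleton_iff] at h2; revert h2; decide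
    have nb3 : ¬G.Adj b (v 3) := fun h' => by
      have h2 := (hbA 3).mp h'; simp only [Set.mem_singleton_iff] at h2; revert h2; decide
    have nb4 : ¬G.Adj b (v 4) := fun h' => by
      have h2 := (hbA 4).mp h'; simp only [Set.mem_singleton_iff] at h2; revert h2; decide
    by_cases hab : G.Adj a b
    · exact no_C6 G hC6 hab pb0 p04 p43 p32 pa2 na0 na4 na3
        nb4 nb3 nb2 n03 n02 n42
    · exact no_P6 G hP6 pa2 p23 p34 p40 pb0.symm na3 na4 na0 hab n24 n20
        (fun h' => nb2 h'.symm) n30 (fun h' => nb3 h'.symm) (fun h' => nb4 h'.symm)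
  have hor : cycS G v {2} = ∅ ∨ cycS G v {5} = ∅ := by
    by_cases h2 : cycS G v {2} = ∅
    · exact Or.inl h2
    · refine Or.inr (Set.eq_empty_iff_forall_notMem.mpr fun b hb => ?_)
      obtain ⟨a, ha⟩ := Set.nonempty_iff_ne_empty.mpr h2
      exact claim25 a b ha hb
  have hdeg1 : cycSdeg G v 1 = cycS G v {2} ∪ cycS G v {5} := by
    ext u
    simp only [cycSdeg, Set.mem_setOf_eq, Set.mem_union]
    constructor
    · rintro ⟨hu1, hcard⟩
      obtain ⟨i0, hi0⟩ := Set.ncard_eq_one.mp hcard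
      have hmem : ∀ i, G.Adj u (v i) ↔ i = i0 := fun i => by
        have h2 := Set.ext_iff.mp hi0 i; simpa using h2
      have h5 := (by decide : ∀ z : ZMod 5, z = 0 ∨ z = 1 ∨ z = 2 ∨ z = 3 ∨ z = 4) i0
      rcases h5 with h|h|h|h|h <;> subst h
      · right
        exact ⟨hu1, fun i => by
          rw [Set.mem_singleton_iff, show (5 : ZMod 5) = 0 from by decide]; exact hmem i⟩
      · exfalso
        have hin : u ∈ cycS G v {1} :=
          ⟨hu1, fun i => by rw [Set.mem_singleton_iff]; exact hmem i⟩
        rw [empty1] at hin; exact hin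
      · left
        exact ⟨hu1, fun i => by rw [Set.mem_singleton_iff]; exact hmem i⟩
      · exfalso
        have hin : u ∈ cycS G v {3} :=
          ⟨hu1, fun i => by rw [Set.mem_singleton_iff]; exact hmem i⟩
        rw [empty3] at hin; exact hin
      · exfalso
        have hin : u ∈ cycS G v {4} :=
          ⟨hu1, fun i => by rw [Set.mem_singleton_iff]; exact hmem i⟩
        rw [empty4] at hin; exact hin
    · rintro (⟨hu1, huA⟩ | ⟨hu1, huA⟩) <;> refine ⟨hu1, ?_⟩
      · have hset : {i | G.Adj u (v i)} = {2} := Set.ext fun i => by simpa using huA i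
        rw [hset]; exact Set.ncard_singleton _
      · have hset : {i | G.Adj u (v i)} = {5} := Set.ext fun i => by simpa using huA i
        rw [hset]; exact Set.ncard_singleton _
  have hdeg2 : cycSdeg G v 2 = cycS G v {2, 3} ∪ cycS G v {4, 5} := by
    ext u
    simp only [cycSdeg, Set.mem_setOf_eq, Set.mem_union]
    constructor
    · rintro ⟨hu1, hcard⟩
      obtain ⟨i, j, hij, hset⟩ := Set.ncard_eq_two.mp hcard
      have hmem : ∀ k, G.Adj u (v k) ↔ (k = i ∨ k = j) := fun k => by
        have h2 := Set.ext_iff.mp hset k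
        simpa [Set.mem_insert_iff] using h2
      have hc02 : (∀ k, G.Adj u (v k) ↔ (k = 0 ∨ k = 2)) → False := fun hm =>
        no_C4 G hC4 (hu1 1) (fun h' => absurd (hvinj h') (by decide))
          ((hm 0).mpr (Or.inl rfl)) p01 p12 ((hm 2).mpr (Or.inr rfl))
          (fun h' => by have h2 := (hm 1).mp h'; revert h2; decide) n02
      have hc13 : (∀ k, G.Adj u (v k) ↔ (k = 1 ∨ k = 3)) → False := fun hm =>
        no_C4 G hC4 (hu1 2) (fun h' => absurd (hvinj h') (by decide))
          ((hm 1).mpr (Or.inl rfl)) p12 p23 ((hm 3).mpr (Or.inr rfl))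
          (fun h' => by have h2 := (hm 2).mp h'; revert h2; decide) n13
      have hc24 : (∀ k, G.Adj u (v k) ↔ (k = 2 ∨ k = 4)) → False := fun hm =>
        no_C4 G hC4 (hu1 3) (fun h' => absurd (hvinj h') (by decide))
          ((hm 2).mpr (Or.inl rfl)) p23 p34 ((hm 4).mpr (Or.inr rfl))
          (fun h' => by have h2 := (hm 3).mp h'; revert h2; decide) n24
      have hc30 : (∀ k, G.Adj u (v k) ↔ (k = 3 ∨ k = 0)) → False := fun hm =>
        no_C4 G hC4 (hu1 4) (fun h' => absurd (hvinj h') (by decide))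
          ((hm 3).mpr (Or.inl rfl)) p34 p40 ((hm 0).mpr (Or.inr rfl))
          (fun h' => by have h2 := (hm 4).mp h'; revert h2; decide) n30
      have hc41 : (∀ k, G.Adj u (v k) ↔ (k = 4 ∨ k = 1)) → False := fun hm =>
        no_C4 G hC4 (hu1 0) (fun h' => absurd (hvinj h') (by decide))
          ((hm 4).mpr (Or.inl rfl)) p40 p01 ((hm 1).mpr (Or.inr rfl))
          (fun h' => by have h2 := (hm 0).mp h'; revert h2; decide) n41
      have h20 := (by decide : ∀ p q : ZMod 5, p ≠ q →
        (p=0∧q=1)∨(p=1∧q=0)∨(p=0∧q=2)∨(p=2∧q=0)∨(p=0∧q=3)∨(p=3∧q=0)∨(p=0∧q=4)∨(p=4∧q=0)∨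
        (p=1∧q=2)∨(p=2∧q=1)∨(p=1∧q=3)∨(p=3∧q=1)∨(p=1∧q=4)∨(p=4∧q=1)∨(p=2∧q=3)∨(p=3∧q=2)∨
        (p=2∧q=4)∨(p=4∧q=2)∨(p=3∧q=4)∨(p=4∧q=3)) i j hij
      rcases h20 with ⟨rfl,rfl⟩|⟨rfl,rfl⟩|⟨rfl,rfl⟩|⟨rfl,rfl⟩|⟨rfl,rfl⟩|⟨rfl,rfl⟩|⟨rfl,rfl⟩|⟨rfl,rfl⟩|⟨rfl,rfl⟩|⟨rfl,rfl⟩|⟨rfl,rfl⟩|⟨rfl,rfl⟩|⟨rfl,rfl⟩|⟨rfl,rfl⟩|⟨rfl,rfl⟩|⟨rfl,rfl⟩|⟨rfl,rfl⟩|⟨rfl,rfl⟩|⟨rfl,rfl⟩|⟨rfl,rfl⟩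
      · exfalso
        have hin : u ∈ cycS G v {5, 1} := ⟨hu1, fun k => by
          simp only [Set.mem_insert_iff, Set.mem_singleton_iff,
            show (5 : ZMod 5) = 0 from by decide]
          exact hmem k⟩
        rw [empty01] at hin; exact hin
      · exfalso
        have hin : u ∈ cycS G v {5, 1} := ⟨hu1, fun k => by
          simp only [Set.mem_insert_iff, Set.mem_singleton_iff,
            show (5 : ZMod 5) = 0 from by decide]
          exact (hmem k).trans or_comm⟩
        rw [empty01] at hin; exact hin
      · exact (hc02 hmem).elim
      · exact (hc02 fun k => (hmem k).trans or_comm).elim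
      · exact (hc30 fun k => (hmem k).trans or_comm).elim
      · exact (hc30 hmem).elim
      · exact Or.inr ⟨hu1, fun k => by
          simp only [Set.mem_insert_iff, Set.mem_singleton_iff,
            show (5 : ZMod 5) = 0 from by decide]
          exact (hmem k).trans or_comm⟩
      · exact Or.inr ⟨hu1, fun k => by
          simp only [Set.mem_insert_iff, Set.mem_singleton_iff,
            show (5 : ZMod 5) = 0 from by decide]
          exact hmem k⟩
      · exfalso
        have hin : u ∈ cycS G v {1, 2} := ⟨hu1, fun k => by
          simp only [Set.mem_insert_iff, Set.mem_singleton_iff]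
          exact hmem k⟩
        rw [empty12] at hin; exact hin
      · exfalso
        have hin : u ∈ cycS G v {1, 2} := ⟨hu1, fun k => by
          simp only [Set.mem_insert_iff, Set.mem_singleton_iff]
          exact (hmem k).trans or_comm⟩
        rw [empty12] at hin; exact hin
      · exact (hc13 hmem).elim
      · exact (hc13 fun k => (hmem k).trans or_comm).elim
      · exact (hc41 fun k => (hmem k).trans or_comm).elim
      · exact (hc41 hmem).elim
      · exact Or.inl ⟨hu1, fun k => by
          simp only [Set.mem_insert_iff, Set.mem_singleton_iff]
          exact hmem k⟩
      · exact Or.inl ⟨hu1, fun k => by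
          simp only [Set.mem_insert_iff, Set.mem_singleton_iff]
          exact (hmem k).trans or_comm⟩
      · exact (hc24 hmem).elim
      · exact (hc24 fun k => (hmem k).trans or_comm).elim
      · exfalso
        have hin : u ∈ cycS G v {3, 4} := ⟨hu1, fun k => by
          simp only [Set.mem_insert_iff, Set.mem_singleton_iff]
          exact hmem k⟩
        rw [empty34] at hin; exact hin
      · exfalso
        have hin : u ∈ cycS G v {3, 4} := ⟨hu1, fun k => by
          simp only [Set.mem_insert_iff, Set.mem_singleton_iff]
          exact (hmem k).trans or_comm⟩
        rw [empty34] at hin; exact hin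
    · rintro (⟨hu1, huA⟩ | ⟨hu1, huA⟩) <;> refine ⟨hu1, ?_⟩
      · have hset : {k | G.Adj u (v k)} = {2, 3} := Set.ext fun k => by simpa using huA k
        rw [hset]; exact Set.ncard_pair (by decide)
      · have hset : {k | G.Adj u (v k)} = {4, 5} := Set.ext fun k => by simpa using huA k
        rw [hset]; exact Set.ncard_pair (by decide)
  exact ⟨⟨empty1, empty3, empty4⟩, hdeg1, hor, ⟨empty34, empty12, empty01⟩, hdeg2⟩

theorem stmt_14 {V : Type*} [Fintype V] (G : SimpleGraph V)
    (hC4 : _root_.Free G (cycleGraph 4)) (hC6 : _root_.Free G (cycleGraph 6))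
    (hP6 : _root_.Free G (pathGraph 6))
    (f : F2 ↪g G) :
    -- with respect to the underlying 5-cycle `C = v₁v₂v₃v₄v₅` of the copy of `F₂`
    -- (here `v i` is `vᵢ`, indices mod 5, so `v 0 = v₅`):
    (cycS G (underlyingC5 (f : Fin 8 → V)) {1} = ∅ ∧
      cycS G (underlyingC5 (f : Fin 8 → V)) {3} = ∅ ∧
      cycS G (underlyingC5 (f : Fin 8 → V)) {4} = ∅) ∧
    cycSdeg G (underlyingC5 (f : Fin 8 → V)) 1 =
      cycS G (underlyingC5 (f : Fin 8 → V)) {2} ∪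
        cycS G (underlyingC5 (f : Fin 8 → V)) {5} ∧
    (cycS G (underlyingC5 (f : Fin 8 → V)) {2} = ∅ ∨
      cycS G (underlyingC5 (f : Fin 8 → V)) {5} = ∅) ∧
    (cycS G (underlyingC5 (f : Fin 8 → V)) {3, 4} = ∅ ∧
      cycS G (underlyingC5 (f : Fin 8 → V)) {1, 2} = ∅ ∧
      cycS G (underlyingC5 (f : Fin 8 → V)) {5, 1} = ∅) ∧
    cycSdeg G (underlyingC5 (f : Fin 8 → V)) 2 =
      cycS G (underlyingC5 (f : Fin 8 → V)) {2, 3} ∪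
        cycS G (underlyingC5 (f : Fin 8 → V)) {4, 5} := by
  refine aux G hC4 hC6 hP6 (underlyingC5 (f : Fin 8 → V)) (f 5) (f 6) (f 7)
    ⟨?_, ?_⟩ ⟨?_, ?_⟩ ⟨?_, ?_⟩ ⟨?_, ?_⟩ ?_ ?_ ?_ ?_
  · intro i j h
    simp only [underlyingC5] at h
    have h2 : (i - 1).val = (j - 1).val := congrArg (@Fin.val 8) (f.injective h)
    have h3 : i - 1 = j - 1 := ZMod.val_injective 5 h2
    have h4 := congrArg (· + 1) h3
    simpa using h4
  · intro i j
    simp only [underlyingC5]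
    rw [f.map_adj_iff]
    revert i j
    decide
  · intro i h
    simp only [underlyingC5] at h
    have h2 : (5 : ℕ) = (i - 1).val := congrArg (@Fin.val 8) (f.injective h)
    have h3 := ZMod.val_lt (i - 1)
    omega
  · intro i
    simp only [underlyingC5]
    rw [f.map_adj_iff]
    simp only [Set.mem_insert_iff, Set.mem_singleton_iff]
    revert i
    decide
  · intro i h
    simp only [underlyingC5] at h
    have h2 : (6 : ℕ) = (i - 1).val := congrArg (@Fin.val 8) (f.injective h)
    have h3 := ZMod.val_lt (i - 1)
    omega
  · intro i
    simp only [underlyingC5]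
    rw [f.map_adj_iff]
    simp only [Set.mem_insert_iff, Set.mem_singleton_iff]
    revert i
    decide
  · intro i h
    simp only [underlyingC5] at h
    have h2 : (7 : ℕ) = (i - 1).val := congrArg (@Fin.val 8) (f.injective h)
    have h3 := ZMod.val_lt (i - 1)
    omega
  · intro i
    simp only [underlyingC5]
    rw [f.map_adj_iff]
    simp only [Set.mem_insert_iff, Set.mem_singleton_iff]
    revert i
    decide
  · exact f.map_adj_iff.mpr (by decide)
  · exact f.map_adj_iff.mpr (by decide)
  · exact fun h => absurd (f.map_adj_iff.mp h) (by decide)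
  · exact fun h => absurd (f.injective h) (by decide)
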